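/- Almost surely, f(X_{Δ,T}) = E[f(X_{Δ,T})] + Σ_{j=1}^{J} Σ_{(U_1,U_2)∈𝒜} Σ_{o∈{1,2}^{U_1}} a_{j,o,U_1,U_2}(X_{Δ,(j−1)Δ}) ∏_{r∈U_1} H_{o_r}(ξ_j^r) ∏_{(k,l)∈U_2} V_j^{kl}; moreover E[f(X_{Δ,T})] = q_0(x_0). -/

import Mathlib

open MeasureTheory ProbabilityTheory Finset

noncomputable section

/-- Map a boolean to `±1`. -/
def pm (b : Bool) : ℝ := if b then 1 else -1

/-- The index set `I_2 = {(k,l) : 1 ≤ k < l ≤ m}`. -/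
abbrev Upper (m : ℕ) := {p : Fin m × Fin m // p.1 < p.2}

/-- Law of a fair `±1` coin. -/
def coinLaw : Measure ℝ :=
  (1 / 2 : ENNReal) • Measure.dirac (1 : ℝ) + (1 / 2 : ENNReal) • Measure.dirac (-1 : ℝ)

/-- Law with `P(±√3) = 1/6`, `P(0) = 2/3`. -/
def xiLaw : Measure ℝ :=
  (1 / 6 : ENNReal) • Measure.dirac (Real.sqrt 3)
    + (1 / 6 : ENNReal) • Measure.dirac (-Real.sqrt 3)
    + (2 / 3 : ENNReal) • Measure.dirac (0 : ℝ)

/-- The three values `−√3, 0, √3`. -/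
def val3 : Fin 3 → ℝ := ![-Real.sqrt 3, 0, Real.sqrt 3]

/-- The normalized Hermite polynomial `H_2(x) = (x² − 1)/√2` (`H_1(x) = x`). -/
def H2 (t : ℝ) : ℝ := (t ^ 2 - 1) / Real.sqrt 2

/-- The antisymmetric matrix `z` built from upper-triangular `±1` entries, with
`z^{vu} = −z^{uv}` and `z^{uu} = −1`. -/
def zmat {m : ℕ} (b : Upper m → Bool) : Fin m → Fin m → ℝ := fun i l =>
  if h : i < l then pm (b ⟨(i, l), h⟩)
  else if h' : l < i then -pm (b ⟨(l, i), h'⟩)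
  else -1

/-- Backward recursion: `qB Φ f k = q_{J-k}`, i.e. `qB Φ f 0 = q_J = f` and
`q_{j-1}(x) = 2^{-m(m-1)/2} 6^{-m} Σ_y Σ_z 4^{#{i : yᵢ = 0}} q_j(Φ x y z)`. -/
def qB {d m : ℕ}
    (Φ : (Fin d → ℝ) → (Fin m → ℝ) → (Fin m → Fin m → ℝ) → Fin d → ℝ)
    (f : (Fin d → ℝ) → ℝ) : ℕ → (Fin d → ℝ) → ℝ
  | 0 => f
  | k + 1 => fun x =>
      ((2 : ℝ) ^ (m * (m - 1) / 2))⁻¹ * ((6 : ℝ) ^ m)⁻¹ *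
        ∑ y : Fin m → Fin 3, ∑ b : Upper m → Bool,
          (4 : ℝ) ^ ((Finset.univ.filter fun i => y i = 1).card) *
            qB Φ f k (Φ x (fun i => val3 (y i)) (zmat b))

/-- Coefficient `a_{j,o,U_1,U_2}` with `k = J - j`, where `o ∈ {1,2}^{U_1}` is encoded
by the subset `K_2 = {r ∈ U_1 : o_r = 2} ⊆ U_1` (so `𝒦_1 = U_1 \ K_2`):
`a(x) = 2^{-m(m-1)/2} 6^{-m} Σ_y Σ_z 4^{#{i : yᵢ = 0}} (Π_{r∈U_1} H_{o_r}(y^r))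
(Π_{(k,l)∈U_2} z^{kl}) q_j(Φ x y z)`. -/
def aB {d m : ℕ}
    (Φ : (Fin d → ℝ) → (Fin m → ℝ) → (Fin m → Fin m → ℝ) → Fin d → ℝ)
    (f : (Fin d → ℝ) → ℝ) (k : ℕ)
    (U1 K2 : Finset (Fin m)) (U2 : Finset (Upper m)) (x : Fin d → ℝ) : ℝ :=
  ((2 : ℝ) ^ (m * (m - 1) / 2))⁻¹ * ((6 : ℝ) ^ m)⁻¹ *
    ∑ y : Fin m → Fin 3, ∑ b : Upper m → Bool,
      (4 : ℝ) ^ ((Finset.univ.filter fun i => y i = 1).card) *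
        ((∏ r ∈ U1 \ K2, val3 (y r)) * (∏ r ∈ K2, H2 (val3 (y r))) *
          (∏ p ∈ U2, pm (b p)) * qB Φ f k (Φ x (fun i => val3 (y i)) (zmat b)))

/-- The second order discretisation scheme `X_{Δ,0} = x_0`,
`X_{Δ,jΔ} = Φ_Δ(X_{Δ,(j-1)Δ}, ξ_j, V_j)`. -/
def XB {d m : ℕ} {Ω : Type*}
    (Φ : (Fin d → ℝ) → (Fin m → ℝ) → (Fin m → Fin m → ℝ) → Fin d → ℝ)
    (x0 : Fin d → ℝ) (ξ : ℕ → Ω → Fin m → ℝ)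
    (V : ℕ → Ω → Fin m → Fin m → ℝ) : ℕ → Ω → Fin d → ℝ
  | 0 => fun _ => x0
  | j + 1 => fun ω => Φ (XB Φ x0 ξ V j ω) (ξ (j + 1) ω) (V (j + 1) ω)

/-- All scalar noise coordinates `ξ_j^i` and `V_j^{il}` (`i < l`) as one family. -/
def noiseB {m : ℕ} {Ω : Type*} (ξ : ℕ → Ω → Fin m → ℝ)
    (V : ℕ → Ω → Fin m → Fin m → ℝ) : ℕ × (Fin m ⊕ Upper m) → Ω → ℝ :=
  fun p ω =>
    match p.2 with
    | Sum.inl i => ξ p.1 ω i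
    | Sum.inr u => V p.1 ω u.1.1 u.1.2

section Aux

open Finset

/-- weights -/
def w3 : Fin 3 → ℝ := ![1/6, 2/3, 1/6]

lemma sum_U2 {ι : Type*} [Fintype ι] [DecidableEq ι] (c : ι → ℝ) :
    ∑ U : Finset ι, ∏ p ∈ U, c p = ∏ p, (1 + c p) := by
  have h := Finset.prod_add c (fun _ => (1:ℝ)) Finset.univ
  simp only [Finset.prod_const_one, mul_one] at h
  rw [← Finset.powerset_univ]
  rw [← h]
  exact Finset.prod_congr rfl fun i _ => by ring

lemma sum_U1 {ι : Type*} [Fintype ι] [DecidableEq ι] (A B : ι → ℝ) :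
    ∑ U1 : Finset ι, ∑ K2 ∈ U1.powerset, (∏ r ∈ U1 \ K2, A r) * ∏ r ∈ K2, B r
      = ∏ r, (1 + A r + B r) := by
  have h := Finset.prod_add (fun r => A r + B r) (fun _ => (1:ℝ)) Finset.univ
  simp only [Finset.prod_const_one, mul_one] at h
  have h2 : ∀ U1 : Finset ι, ∏ r ∈ U1, (A r + B r)
      = ∑ K2 ∈ U1.powerset, (∏ r ∈ U1 \ K2, A r) * ∏ r ∈ K2, B r := by
    intro U1
    have := Finset.prod_add B A U1
    rw [Finset.prod_congr rfl (fun r _ => add_comm (A r) (B r)), this]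
    exact Finset.sum_congr rfl fun K2 _ => by ring
  calc ∑ U1 : Finset ι, ∑ K2 ∈ U1.powerset, (∏ r ∈ U1 \ K2, A r) * ∏ r ∈ K2, B r
      = ∑ U1 ∈ (Finset.univ : Finset ι).powerset, ∏ r ∈ U1, (A r + B r) := by
        rw [Finset.powerset_univ]; exact Finset.sum_congr rfl fun U1 _ => (h2 U1).symm
    _ = ∏ r, (1 + A r + B r) := by
        rw [← h]; exact Finset.prod_congr rfl fun i _ => by ring

lemma card_upper (m : ℕ) : Fintype.card (Upper m) = m * (m - 1) / 2 := by
  have e : Upper m ≃ Σ l : Fin m, Fin l.1 :=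
    { toFun := fun p => ⟨p.1.2, ⟨p.1.1.1, p.2⟩⟩
      invFun := fun q => ⟨(⟨q.2.1, lt_trans q.2.2 q.1.2⟩, q.1), q.2.2⟩
      left_inv := fun p => rfl
      right_inv := fun q => rfl }
  rw [Fintype.card_congr e, Fintype.card_sigma]
  simp only [Fintype.card_fin]
  rw [Fin.sum_univ_eq_sum_range (fun i => i) m, Finset.sum_range_id]

lemma prod_half (m : ℕ) : (∏ _p : Upper m, (1/2:ℝ)) = ((2:ℝ) ^ (m * (m-1) / 2))⁻¹ := by
  rw [Finset.prod_const, Finset.card_univ, card_upper]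
  simp [one_div, inv_pow]

lemma prod_w3 {m : ℕ} (y : Fin m → Fin 3) :
    (∏ r, w3 (y r)) = ((6:ℝ)^m)⁻¹ * 4 ^ ((Finset.univ.filter fun i => y i = 1).card) := by
  have h : ∀ t : Fin 3, w3 t = (6:ℝ)⁻¹ * (if t = 1 then 4 else 1) := by
    intro t; fin_cases t <;> norm_num [w3, Fin.ext_iff]
  simp_rw [h]
  rw [Finset.prod_mul_distrib, Finset.prod_const, Finset.prod_ite, Finset.prod_const,
    Finset.prod_const, Finset.card_univ, Fintype.card_fin, one_pow, mul_one, inv_pow]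

lemma kernel3 (s t : Fin 3) :
    w3 t * (1 + val3 s * val3 t + H2 (val3 s) * H2 (val3 t)) = if s = t then 1 else 0 := by
  have h2ne : Real.sqrt 2 ≠ 0 := ne_of_gt (Real.sqrt_pos.2 (by norm_num))
  have m3 : Real.sqrt 3 * Real.sqrt 3 = 3 := Real.mul_self_sqrt (by norm_num)
  have m2 : Real.sqrt 2 * Real.sqrt 2 = 2 := Real.mul_self_sqrt (by norm_num)
  have mi : (Real.sqrt 2)⁻¹ * (Real.sqrt 2)⁻¹ = 2⁻¹ := by rw [← mul_inv, m2]
  have mc : Real.sqrt 2 * (Real.sqrt 2)⁻¹ = 1 := mul_inv_cancel₀ h2ne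
  have e1 : H2 (-Real.sqrt 3) = Real.sqrt 2 := by
    rw [H2, div_eq_iff h2ne]; nlinarith [m2, m3]
  have e2 : H2 (Real.sqrt 3) = Real.sqrt 2 := by
    rw [H2, div_eq_iff h2ne]; nlinarith [m2, m3]
  have e3 : H2 0 = -(Real.sqrt 2)⁻¹ := by
    rw [H2, div_eq_iff h2ne]; nlinarith [m2, mc]
  fin_cases s <;> fin_cases t <;>
    norm_num [w3, val3, e1, e2, e3, Fin.ext_iff] <;>
    nlinarith [m3, m2, mi, mc]

lemma kernelB (s t : Bool) : (1/2 : ℝ) * (1 + pm s * pm t) = if s = t then 1 else 0 := by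
  cases s <;> cases t <;> norm_num [pm]

lemma triple_factor {α β γ : Type*} (s : Finset α) (t : Finset β) (p : α → Finset γ)
    (A : α → γ → ℝ) (C : β → ℝ) :
    ∑ U1 ∈ s, ∑ U2 ∈ t, ∑ K2 ∈ p U1, A U1 K2 * C U2
      = (∑ U1 ∈ s, ∑ K2 ∈ p U1, A U1 K2) * ∑ U2 ∈ t, C U2 := by
  simp only [Finset.sum_mul]
  refine Finset.sum_congr rfl fun U1 _ => ?_
  rw [Finset.sum_comm]
  exact Finset.sum_congr rfl fun K2 _ => (Finset.mul_sum _ _ _).symm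

/-- product of weight and orthogonal-polynomial factors -/
def PP {m : ℕ} (U1 K2 : Finset (Fin m)) (U2 : Finset (Upper m))
    (c : (Fin m → Fin 3) × (Upper m → Bool)) : ℝ :=
  (∏ r ∈ U1 \ K2, val3 (c.1 r)) * (∏ r ∈ K2, H2 (val3 (c.1 r))) * ∏ p ∈ U2, pm (c.2 p)

def WW {m : ℕ} (c : (Fin m → Fin 3) × (Upper m → Bool)) : ℝ :=
  (∏ r, w3 (c.1 r)) * ∏ _p : Upper m, (1/2:ℝ)

set_option maxHeartbeats 1000000 in
lemma master {m : ℕ} (g : ((Fin m → Fin 3) × (Upper m → Bool)) → ℝ)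
    (c0 : (Fin m → Fin 3) × (Upper m → Bool)) :
    ∑ U1 : Finset (Fin m), ∑ U2 : Finset (Upper m), ∑ K2 ∈ U1.powerset,
      (∑ c, WW c * PP U1 K2 U2 c * g c) * PP U1 K2 U2 c0 = g c0 := by
  have swap : ∑ U1 : Finset (Fin m), ∑ U2 : Finset (Upper m), ∑ K2 ∈ U1.powerset,
      (∑ c, WW c * PP U1 K2 U2 c * g c) * PP U1 K2 U2 c0
      = ∑ c, WW c * g c * ∑ U1 : Finset (Fin m), ∑ U2 : Finset (Upper m), ∑ K2 ∈ U1.powerset,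
          (PP U1 K2 U2 c0 * PP U1 K2 U2 c) := by
    simp only [Finset.sum_mul, Finset.mul_sum]
    calc ∑ U1 : Finset (Fin m), ∑ U2 : Finset (Upper m), ∑ K2 ∈ U1.powerset,
        ∑ c, WW c * PP U1 K2 U2 c * g c * PP U1 K2 U2 c0
        = ∑ U1 : Finset (Fin m), ∑ U2 : Finset (Upper m), ∑ c, ∑ K2 ∈ U1.powerset,
            WW c * PP U1 K2 U2 c * g c * PP U1 K2 U2 c0 :=
          Finset.sum_congr rfl fun U1 _ => Finset.sum_congr rfl fun U2 _ => Finset.sum_comm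
      _ = ∑ U1 : Finset (Fin m), ∑ c, ∑ U2 : Finset (Upper m), ∑ K2 ∈ U1.powerset,
            WW c * PP U1 K2 U2 c * g c * PP U1 K2 U2 c0 :=
          Finset.sum_congr rfl fun U1 _ => Finset.sum_comm
      _ = ∑ c, ∑ U1 : Finset (Fin m), ∑ U2 : Finset (Upper m), ∑ K2 ∈ U1.powerset,
            WW c * PP U1 K2 U2 c * g c * PP U1 K2 U2 c0 := Finset.sum_comm
      _ = ∑ c, ∑ U1 : Finset (Fin m), ∑ U2 : Finset (Upper m), ∑ K2 ∈ U1.powerset,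
            WW c * g c * (PP U1 K2 U2 c0 * PP U1 K2 U2 c) := by
          refine Finset.sum_congr rfl fun c _ => Finset.sum_congr rfl fun U1 _ =>
            Finset.sum_congr rfl fun U2 _ => Finset.sum_congr rfl fun K2 _ => by ring
  rw [swap]
  have inner : ∀ c : (Fin m → Fin 3) × (Upper m → Bool),
      (∑ U1 : Finset (Fin m), ∑ U2 : Finset (Upper m), ∑ K2 ∈ U1.powerset,
        (PP U1 K2 U2 c0 * PP U1 K2 U2 c))
      = (∏ r, (1 + val3 (c0.1 r) * val3 (c.1 r) + H2 (val3 (c0.1 r)) * H2 (val3 (c.1 r))))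
        * ∏ p, (1 + pm (c0.2 p) * pm (c.2 p)) := by
    intro c
    have hPP : ∀ (U1 K2 : Finset (Fin m)) (U2 : Finset (Upper m)),
        PP U1 K2 U2 c0 * PP U1 K2 U2 c
        = ((∏ r ∈ U1 \ K2, val3 (c0.1 r) * val3 (c.1 r))
            * ∏ r ∈ K2, H2 (val3 (c0.1 r)) * H2 (val3 (c.1 r)))
          * ∏ p ∈ U2, pm (c0.2 p) * pm (c.2 p) := by
      intro U1 K2 U2
      simp only [PP, Finset.prod_mul_distrib]; ring
    simp only [hPP]
    rw [triple_factor (A := fun U1 K2 => (∏ r ∈ U1 \ K2, val3 (c0.1 r) * val3 (c.1 r))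
          * ∏ r ∈ K2, H2 (val3 (c0.1 r)) * H2 (val3 (c.1 r)))
        (C := fun U2 => ∏ p ∈ U2, pm (c0.2 p) * pm (c.2 p))]
    rw [sum_U1, sum_U2]
  simp only [inner]
  have final : ∀ c : (Fin m → Fin 3) × (Upper m → Bool),
      WW c * g c * ((∏ r, (1 + val3 (c0.1 r) * val3 (c.1 r) + H2 (val3 (c0.1 r)) * H2 (val3 (c.1 r))))
        * ∏ p, (1 + pm (c0.2 p) * pm (c.2 p)))
      = (if c0 = c then 1 else 0) * g c := by
    intro c
    have h1 : WW c * g c * ((∏ r, (1 + val3 (c0.1 r) * val3 (c.1 r) + H2 (val3 (c0.1 r)) * H2 (val3 (c.1 r))))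
        * ∏ p, (1 + pm (c0.2 p) * pm (c.2 p)))
        = ((∏ r, w3 (c.1 r) * (1 + val3 (c0.1 r) * val3 (c.1 r) + H2 (val3 (c0.1 r)) * H2 (val3 (c.1 r))))
          * ∏ p, (1/2:ℝ) * (1 + pm (c0.2 p) * pm (c.2 p))) * g c := by
      rw [Finset.prod_mul_distrib, Finset.prod_mul_distrib, WW]; ring
    rw [h1]
    simp only [kernel3, kernelB]
    rw [Fintype.prod_boole, Fintype.prod_boole]
    simp only [← funext_iff]
    by_cases h1 : c0.1 = c.1 <;> by_cases h2 : c0.2 = c.2 <;>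
      simp [h1, h2, Prod.ext_iff]
  simp only [final]
  simp [Finset.sum_ite_eq]

variable {d m : ℕ} (Φ : (Fin d → ℝ) → (Fin m → ℝ) → (Fin m → Fin m → ℝ) → Fin d → ℝ)
  (f : (Fin d → ℝ) → ℝ)

lemma aB_eq (k : ℕ) (U1 K2 : Finset (Fin m)) (U2 : Finset (Upper m)) (x : Fin d → ℝ) :
    aB Φ f k U1 K2 U2 x
      = ∑ c : (Fin m → Fin 3) × (Upper m → Bool),
          WW c * PP U1 K2 U2 c * qB Φ f k (Φ x (fun i => val3 (c.1 i)) (zmat c.2)) := by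
  rw [aB, Fintype.sum_prod_type, Finset.mul_sum]
  refine Finset.sum_congr rfl fun y _ => ?_
  rw [Finset.mul_sum]
  refine Finset.sum_congr rfl fun b _ => ?_
  simp only [WW, PP]
  rw [prod_w3 y, prod_half]
  ring

lemma qB_succ_eq (k : ℕ) (x : Fin d → ℝ) :
    qB Φ f (k+1) x
      = ∑ c : (Fin m → Fin 3) × (Upper m → Bool),
          WW c * qB Φ f k (Φ x (fun i => val3 (c.1 i)) (zmat c.2)) := by
  simp only [qB]
  rw [Fintype.sum_prod_type, Finset.mul_sum]
  refine Finset.sum_congr rfl fun y _ => ?_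
  rw [Finset.mul_sum]
  refine Finset.sum_congr rfl fun b _ => ?_
  simp only [WW]
  rw [prod_w3 y, prod_half]
  ring

lemma aB_empty (k : ℕ) (x : Fin d → ℝ) :
    aB Φ f k ∅ ∅ ∅ x = qB Φ f (k+1) x := by
  simp only [aB, qB]
  simp

set_option maxHeartbeats 1000000 in
lemma step_expand (k : ℕ) (x : Fin d → ℝ) (y0 : Fin m → Fin 3) (b0 : Upper m → Bool) :
    qB Φ f k (Φ x (fun i => val3 (y0 i)) (zmat b0))
      = qB Φ f (k+1) x
        + ∑ U1 : Finset (Fin m),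
            ∑ U2 ∈ (Finset.univ : Finset (Finset (Upper m))).filter
                (fun U2 => U1.Nonempty ∨ U2.Nonempty),
              ∑ K2 ∈ U1.powerset, aB Φ f k U1 K2 U2 x * PP U1 K2 U2 (y0, b0) := by
  have h := master (fun c => qB Φ f k (Φ x (fun i => val3 (c.1 i)) (zmat c.2))) (y0, b0)
  simp only [← aB_eq Φ f k] at h
  rw [← h]
  have split : ∀ U1 : Finset (Fin m),
      (∑ U2 : Finset (Upper m), ∑ K2 ∈ U1.powerset, aB Φ f k U1 K2 U2 x * PP U1 K2 U2 (y0, b0))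
      = (∑ U2 ∈ (Finset.univ : Finset (Finset (Upper m))).filter
            (fun U2 => U1.Nonempty ∨ U2.Nonempty),
          ∑ K2 ∈ U1.powerset, aB Φ f k U1 K2 U2 x * PP U1 K2 U2 (y0, b0))
        + ∑ U2 ∈ (Finset.univ : Finset (Finset (Upper m))).filter
            (fun U2 => ¬(U1.Nonempty ∨ U2.Nonempty)),
          ∑ K2 ∈ U1.powerset, aB Φ f k U1 K2 U2 x * PP U1 K2 U2 (y0, b0) := by
    intro U1
    exact (Finset.sum_filter_add_sum_filter_not _ _ _).symm
  refine (Finset.sum_congr rfl fun U1 _ => split U1).trans ?_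
  rw [Finset.sum_add_distrib, add_comm, add_left_inj]
  have hU1 : ∀ U1 : Finset (Fin m),
      ((Finset.univ : Finset (Finset (Upper m))).filter
        (fun U2 => ¬(U1.Nonempty ∨ U2.Nonempty)))
      = if U1 = ∅ then {∅} else ∅ := by
    intro U1
    ext U2
    by_cases h1 : U1 = ∅ <;>
      simp [h1, Finset.not_nonempty_iff_eq_empty, Finset.mem_filter]
  calc ∑ U1 : Finset (Fin m),
      ∑ U2 ∈ (Finset.univ : Finset (Finset (Upper m))).filter
          (fun U2 => ¬(U1.Nonempty ∨ U2.Nonempty)),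
        ∑ K2 ∈ U1.powerset, aB Φ f k U1 K2 U2 x * PP U1 K2 U2 (y0, b0)
      = aB Φ f k ∅ ∅ ∅ x * PP ∅ ∅ ∅ (y0, b0) := by
        rw [Finset.sum_eq_single ∅]
        · rw [hU1 ∅, if_pos rfl, Finset.sum_singleton, Finset.powerset_empty,
            Finset.sum_singleton]
        · intro U1 _ hne
          rw [hU1 U1, if_neg hne, Finset.sum_empty]
        · intro h; exact absurd (Finset.mem_univ _) h
    _ = qB Φ f (k+1) x := by
        rw [aB_empty]
        simp [PP]

def cl (x : ℝ) : Fin 3 := if x = -Real.sqrt 3 then 0 else if x = 0 then 1 else 2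
def cb (x : ℝ) : Bool := decide (x = 1)

lemma partA {Ω : Type*} (x0 : Fin d → ℝ) (J : ℕ) (ξ : ℕ → Ω → Fin m → ℝ)
    (V : ℕ → Ω → Fin m → Fin m → ℝ) (ω : Ω)
    (h1 : ∀ j i, val3 (cl (ξ j ω i)) = ξ j ω i)
    (h2 : ∀ j (p : Upper m), pm (cb (V j ω p.1.1 p.1.2)) = V j ω p.1.1 p.1.2)
    (hVanti : ∀ j i l, i < l → V j ω l i = -V j ω i l)
    (hVdiag : ∀ j i, V j ω i i = -1) :
    f (XB Φ x0 ξ V J ω)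
      = qB Φ f J x0
        + ∑ j ∈ Finset.Icc 1 J, ∑ U1 : Finset (Fin m),
            ∑ U2 ∈ (Finset.univ : Finset (Finset (Upper m))).filter
                (fun U2 => U1.Nonempty ∨ U2.Nonempty),
              ∑ K2 ∈ U1.powerset,
                aB Φ f (J - j) U1 K2 U2 (XB Φ x0 ξ V (j - 1) ω)
                  * (∏ r ∈ U1 \ K2, ξ j ω r) * (∏ r ∈ K2, H2 (ξ j ω r))
                  * ∏ p ∈ U2, V j ω p.1.1 p.1.2 := by
  have hzmat : ∀ j, V j ω = zmat (fun p => cb (V j ω p.1.1 p.1.2)) := by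
    intro j
    funext i l
    unfold zmat
    rcases lt_trichotomy i l with h | h | h
    · rw [dif_pos h]; exact (h2 j ⟨(i, l), h⟩).symm
    · subst h; rw [dif_neg (lt_irrefl i), dif_neg (lt_irrefl i)]; exact hVdiag j i
    · rw [dif_neg (not_lt_of_gt h), dif_pos h]
      rw [h2 j ⟨(l, i), h⟩]
      exact hVanti j l i h
  set inner : ℕ → ℝ := fun j =>
    ∑ U1 : Finset (Fin m),
      ∑ U2 ∈ (Finset.univ : Finset (Finset (Upper m))).filter
          (fun U2 => U1.Nonempty ∨ U2.Nonempty),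
        ∑ K2 ∈ U1.powerset,
          aB Φ f (J - j) U1 K2 U2 (XB Φ x0 ξ V (j - 1) ω)
            * (∏ r ∈ U1 \ K2, ξ j ω r) * (∏ r ∈ K2, H2 (ξ j ω r))
            * ∏ p ∈ U2, V j ω p.1.1 p.1.2 with hinner
  set F : ℕ → ℝ := fun i => qB Φ f (J - i) (XB Φ x0 ξ V i ω) with hF
  have key : ∀ i : ℕ, i < J → F (i + 1) - F i = inner (i + 1) := by
    intro i hi
    have hk : J - i = (J - (i+1)) + 1 := by omega
    have hs := step_expand Φ f (J - (i+1)) (XB Φ x0 ξ V i ω)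
      (fun r => cl (ξ (i+1) ω r)) (fun p => cb (V (i+1) ω p.1.1 p.1.2))
    have ef : (fun r => val3 (cl (ξ (i+1) ω r))) = ξ (i+1) ω :=
      funext fun r => h1 (i+1) r
    have ez : zmat (fun p : Upper m => cb (V (i+1) ω p.1.1 p.1.2)) = V (i+1) ω :=
      (hzmat (i+1)).symm
    rw [ef, ez] at hs
    have hL : F (i+1) = qB Φ f (J - (i+1))
        (Φ (XB Φ x0 ξ V i ω) (ξ (i+1) ω) (V (i+1) ω)) := rfl
    have hR : F i = qB Φ f (J - (i+1) + 1) (XB Φ x0 ξ V i ω) := by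
      rw [← hk]
    rw [hL, hs, hR, add_sub_cancel_left]
    simp only [hinner, Nat.add_sub_cancel]
    refine Finset.sum_congr rfl fun U1 _ => Finset.sum_congr rfl fun U2 _ =>
      Finset.sum_congr rfl fun K2 _ => ?_
    simp only [PP]
    have e1 : (∏ r ∈ U1 \ K2, val3 (cl (ξ (i+1) ω r))) = ∏ r ∈ U1 \ K2, ξ (i+1) ω r :=
      Finset.prod_congr rfl fun r _ => h1 (i+1) r
    have e2 : (∏ r ∈ K2, H2 (val3 (cl (ξ (i+1) ω r)))) = ∏ r ∈ K2, H2 (ξ (i+1) ω r) :=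
      Finset.prod_congr rfl fun r _ => by rw [h1 (i+1) r]
    have e3 : (∏ p ∈ U2, pm (cb (V (i+1) ω p.1.1 p.1.2)))
        = ∏ p ∈ U2, V (i+1) ω p.1.1 p.1.2 :=
      Finset.prod_congr rfl fun p _ => h2 (i+1) p
    rw [e1, e2, e3]
    ring
  have tele : ∑ j ∈ Finset.Icc 1 J, inner j = F J - F 0 := by
    rw [← Finset.Ico_add_one_right_eq_Icc, Finset.sum_Ico_eq_sum_range]
    rw [show J + 1 - 1 = J from rfl]
    rw [← Finset.sum_range_sub F J]
    refine Finset.sum_congr rfl fun i hi => ?_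
    rw [Nat.add_comm 1 i]
    exact (key i (Finset.mem_range.mp hi)).symm
  have hFJ : F J = f (XB Φ x0 ξ V J ω) := by
    rw [hF]; simp only [Nat.sub_self]; rfl
  have hF0 : F 0 = qB Φ f J x0 := by
    show qB Φ f (J - 0) (XB Φ x0 ξ V 0 ω) = qB Φ f J x0
    rw [Nat.sub_zero]
    rfl
  rw [tele, hFJ, hF0]
  ring

def GG (Φ : (Fin d → ℝ) → (Fin m → ℝ) → (Fin m → Fin m → ℝ) → Fin d → ℝ) :
    (n : ℕ) → (Fin d → ℝ) → (Fin n → (Fin m → Fin 3) × (Upper m → Bool)) → Fin d → ℝ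
  | 0, x, _ => x
  | n+1, x, t => GG Φ n (Φ x (fun i => val3 ((t 0).1 i)) (zmat (t 0).2)) (fun i => t i.succ)

lemma GG_snoc (n : ℕ) (x : Fin d → ℝ)
    (t : Fin (n+1) → (Fin m → Fin 3) × (Upper m → Bool)) :
    GG Φ (n+1) x t
      = Φ (GG Φ n x (fun i => t i.castSucc))
          (fun i => val3 ((t (Fin.last n)).1 i)) (zmat (t (Fin.last n)).2) := by
  induction n generalizing x with
  | zero => rfl
  | succ n ih =>
      show GG Φ (n+1) (Φ x (fun i => val3 ((t 0).1 i)) (zmat (t 0).2)) (fun i => t i.succ) = _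
      rw [ih]
      have harg : (fun i : Fin n => t i.castSucc.succ)
          = (fun i : Fin n => t i.succ.castSucc) :=
        funext fun i => by rw [Fin.succ_castSucc]
      show Φ (GG Φ n (Φ x (fun i => val3 ((t 0).1 i)) (zmat (t 0).2))
            (fun i : Fin n => t i.castSucc.succ))
          (fun i => val3 ((t (Fin.last (n+1))).1 i)) (zmat (t (Fin.last (n+1))).2) = _
      rw [harg]
      rfl

set_option maxHeartbeats 1000000 in
lemma qB_eq_sum (n : ℕ) (x : Fin d → ℝ) :
    qB Φ f n x
      = ∑ t : Fin n → (Fin m → Fin 3) × (Upper m → Bool),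
          (∏ j, WW (t j)) * f (GG Φ n x t) := by
  induction n generalizing x with
  | zero =>
      have huniv : (Finset.univ : Finset (Fin 0 → (Fin m → Fin 3) × (Upper m → Bool)))
          = {fun j => j.elim0} :=
        Finset.eq_singleton_iff_unique_mem.mpr
          ⟨Finset.mem_univ _, fun t _ => funext fun j => j.elim0⟩
      rw [huniv, Finset.sum_singleton]
      simp [GG, qB]
  | succ n ih =>
      calc qB Φ f (n+1) x
          = ∑ c : (Fin m → Fin 3) × (Upper m → Bool),
              WW c * qB Φ f n (Φ x (fun i => val3 (c.1 i)) (zmat c.2)) := qB_succ_eq Φ f n x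
        _ = ∑ c : (Fin m → Fin 3) × (Upper m → Bool),
            ∑ t : Fin n → (Fin m → Fin 3) × (Upper m → Bool),
              WW c * ((∏ j, WW (t j)) * f (GG Φ n (Φ x (fun i => val3 (c.1 i)) (zmat c.2)) t)) := by
            refine Finset.sum_congr rfl fun c _ => ?_
            rw [ih, Finset.mul_sum]
        _ = ∑ p : ((Fin m → Fin 3) × (Upper m → Bool)) × (Fin n → (Fin m → Fin 3) × (Upper m → Bool)),
              WW p.1 * ((∏ j, WW (p.2 j)) * f (GG Φ n (Φ x (fun i => val3 (p.1.1 i)) (zmat p.1.2)) p.2)) :=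
            (Fintype.sum_prod_type (fun p : ((Fin m → Fin 3) × (Upper m → Bool)) × (Fin n → (Fin m → Fin 3) × (Upper m → Bool)) =>
              WW p.1 * ((∏ j, WW (p.2 j)) * f (GG Φ n (Φ x (fun i => val3 (p.1.1 i)) (zmat p.1.2)) p.2)))).symm
        _ = ∑ t : Fin (n+1) → (Fin m → Fin 3) × (Upper m → Bool),
              (∏ j, WW (t j)) * f (GG Φ (n+1) x t) := by
            refine Fintype.sum_equiv
              (Fin.consEquiv fun _ : Fin (n+1) => (Fin m → Fin 3) × (Upper m → Bool)) _ _ ?_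
            rintro ⟨c, t⟩
            have hc : (Fin.consEquiv fun _ : Fin (n+1) => (Fin m → Fin 3) × (Upper m → Bool)) (c, t)
                = Fin.cons (α := fun _ : Fin (n+1) => (Fin m → Fin 3) × (Upper m → Bool)) c t := rfl
            rw [hc, Fin.prod_univ_succ]
            have hg : GG Φ (n+1) x
                  (Fin.cons (α := fun _ : Fin (n+1) => (Fin m → Fin 3) × (Upper m → Bool)) c t)
                = GG Φ n (Φ x
                    (fun i => val3 ((Fin.cons (α := fun _ : Fin (n+1) => (Fin m → Fin 3) × (Upper m → Bool)) c t 0).1 i))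
                    (zmat (Fin.cons (α := fun _ : Fin (n+1) => (Fin m → Fin 3) × (Upper m → Bool)) c t 0).2))
                  (fun i => Fin.cons (α := fun _ : Fin (n+1) => (Fin m → Fin 3) × (Upper m → Bool)) c t i.succ) := rfl
            rw [hg]
            simp only [Fin.cons_zero, Fin.cons_succ]
            ring

lemma XB_eq_GG {Ω : Type*} (x0 : Fin d → ℝ) (ξ : ℕ → Ω → Fin m → ℝ)
    (V : ℕ → Ω → Fin m → Fin m → ℝ) (ω : Ω)
    (h1 : ∀ j i, val3 (cl (ξ j ω i)) = ξ j ω i)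
    (h2 : ∀ j (p : Upper m), pm (cb (V j ω p.1.1 p.1.2)) = V j ω p.1.1 p.1.2)
    (hVanti : ∀ j i l, i < l → V j ω l i = -V j ω i l)
    (hVdiag : ∀ j i, V j ω i i = -1) :
    ∀ n, XB Φ x0 ξ V n ω
      = GG Φ n x0 (fun j : Fin n =>
          ((fun i => cl (ξ (j+1) ω i)), fun p => cb (V (j+1) ω p.1.1 p.1.2))) := by
  have hzmat : ∀ j, V j ω = zmat (fun p => cb (V j ω p.1.1 p.1.2)) := by
    intro j
    funext i l
    unfold zmat
    rcases lt_trichotomy i l with h | h | h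
    · rw [dif_pos h]; exact (h2 j ⟨(i, l), h⟩).symm
    · subst h; rw [dif_neg (lt_irrefl i), dif_neg (lt_irrefl i)]; exact hVdiag j i
    · rw [dif_neg (not_lt_of_gt h), dif_pos h]
      rw [h2 j ⟨(l, i), h⟩]
      exact hVanti j l i h
  intro n
  induction n with
  | zero => rfl
  | succ n ih =>
      rw [GG_snoc]
      show Φ (XB Φ x0 ξ V n ω) (ξ (n+1) ω) (V (n+1) ω)
        = Φ (GG Φ n x0 (fun j : Fin n =>
            ((fun i => cl (ξ ((j : ℕ)+1) ω i)), fun p => cb (V ((j : ℕ)+1) ω p.1.1 p.1.2))))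
          (fun i => val3 (cl (ξ (n+1) ω i))) (zmat fun p => cb (V (n+1) ω p.1.1 p.1.2))
      rw [← ih]
      rw [show (fun i => val3 (cl (ξ (n+1) ω i))) = ξ (n+1) ω from funext fun i => h1 (n+1) i,
        ← hzmat (n+1)]

def w3e : Fin 3 → ENNReal := ![1/6, 2/3, 1/6]

lemma w3e_toReal (v : Fin 3) : (w3e v).toReal = w3 v := by
  fin_cases v <;> simp [w3e, w3] <;> norm_num [ENNReal.toReal_div]

lemma sqrt3_ne_zero : Real.sqrt 3 ≠ 0 := ne_of_gt (Real.sqrt_pos.2 (by norm_num))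
lemma sqrt3_ne_neg : Real.sqrt 3 ≠ -Real.sqrt 3 := by
  nlinarith [Real.sqrt_pos.2 (show (0:ℝ) < 3 by norm_num)]
lemma neg_sqrt3_ne_zero : -Real.sqrt 3 ≠ 0 := neg_ne_zero.mpr sqrt3_ne_zero

lemma cl_sqrt3 : cl (Real.sqrt 3) = 2 := by
  rw [cl, if_neg sqrt3_ne_neg, if_neg sqrt3_ne_zero]
lemma cl_neg_sqrt3 : cl (-Real.sqrt 3) = 0 := by rw [cl, if_pos rfl]
lemma cl_zero : cl 0 = 1 := by
  rw [cl, if_neg (Ne.symm neg_sqrt3_ne_zero), if_pos rfl]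

lemma measurable_cl : Measurable cl := by
  unfold cl
  refine Measurable.ite ?_ measurable_const (Measurable.ite ?_ measurable_const measurable_const)
  · exact measurableSet_singleton _
  · exact measurableSet_singleton _

lemma measurable_cb : Measurable cb := by
  have : cb = fun x => if x = 1 then true else false := by
    funext x; by_cases h : x = 1 <;> simp [cb, h]
  rw [this]
  exact Measurable.ite (measurableSet_singleton _) measurable_const measurable_const

lemma xiLaw_cl (v : Fin 3) : xiLaw (cl ⁻¹' {v}) = w3e v := by
  have hmeas : MeasurableSet (cl ⁻¹' {v}) := measurable_cl (measurableSet_singleton v)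
  rw [xiLaw]
  fin_cases v <;>
    simp [MeasureTheory.Measure.add_apply, MeasureTheory.Measure.smul_apply,
      MeasureTheory.Measure.dirac_apply' _ hmeas, smul_eq_mul, Set.indicator_apply,
      cl_sqrt3, cl_neg_sqrt3, cl_zero, w3e, Fin.ext_iff]

lemma coinLaw_cb (s : Bool) : coinLaw (cb ⁻¹' {s}) = 1/2 := by
  have hmeas : MeasurableSet (cb ⁻¹' {s}) := measurable_cb (measurableSet_singleton s)
  have c1 : cb (1:ℝ) = true := by simp [cb]
  have c2 : cb (-1:ℝ) = false := by norm_num [cb]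
  rw [coinLaw]
  cases s <;>
    simp [MeasureTheory.Measure.add_apply, MeasureTheory.Measure.smul_apply,
      MeasureTheory.Measure.dirac_apply' _ hmeas, smul_eq_mul, Set.indicator_apply, c1, c2] <;>
    norm_num

lemma xiLaw_compl : xiLaw ({-Real.sqrt 3, 0, Real.sqrt 3}ᶜ : Set ℝ) = 0 := by
  have hS : MeasurableSet ({-Real.sqrt 3, 0, Real.sqrt 3} : Set ℝ) :=
    (((Set.finite_singleton _).insert _).insert _).measurableSet
  rw [xiLaw]
  simp [MeasureTheory.Measure.add_apply, MeasureTheory.Measure.smul_apply,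
    MeasureTheory.Measure.dirac_apply' _ hS.compl, smul_eq_mul, Set.indicator_apply]

lemma coinLaw_compl : coinLaw ({-1, 1}ᶜ : Set ℝ) = 0 := by
  have hS : MeasurableSet ({-1, 1} : Set ℝ) :=
    ((Set.finite_singleton _).insert _).measurableSet
  rw [coinLaw]
  simp [MeasureTheory.Measure.add_apply, MeasureTheory.Measure.smul_apply,
    MeasureTheory.Measure.dirac_apply' _ hS.compl, smul_eq_mul, Set.indicator_apply]

lemma val3_cl_mem {x : ℝ} (h : x ∈ ({-Real.sqrt 3, 0, Real.sqrt 3} : Set ℝ)) :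
    val3 (cl x) = x := by
  rcases h with h | h | h
  · subst h; rw [cl_neg_sqrt3]; rfl
  · subst h; rw [cl_zero]; rfl
  · rw [Set.mem_singleton_iff] at h; subst h; rw [cl_sqrt3]; rfl

lemma pm_cb_mem {x : ℝ} (h : x ∈ ({-1, 1} : Set ℝ)) : pm (cb x) = x := by
  rcases h with h | h
  · subst h; norm_num [cb, pm]
  · rw [Set.mem_singleton_iff] at h; subst h; simp [cb, pm]

end Aux

/-- Almost surely,
`f(X_{Δ,T}) = E[f(X_{Δ,T})] + Σ_{j=1}^J Σ_{(U_1,U_2)∈𝒜} Σ_{o∈{1,2}^{U_1}}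
a_{j,o,U_1,U_2}(X_{Δ,(j-1)Δ}) Π_{r∈U_1} H_{o_r}(ξ_j^r) Π_{(k,l)∈U_2} V_j^{kl}`,
and `E[f(X_{Δ,T})] = q_0(x_0)`; `o` is encoded by `K_2 ⊆ U_1`. -/
theorem stmt3
    {d m : ℕ} (T : ℝ) (hT : 0 < T) (x0 : Fin d → ℝ) (J : ℕ) (hJ : 1 ≤ J)
    {Ω : Type*} [MeasurableSpace Ω] (P : Measure Ω) [IsProbabilityMeasure P]
    (ξ : ℕ → Ω → Fin m → ℝ) (V : ℕ → Ω → Fin m → Fin m → ℝ)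
    (hξmeas : ∀ j, Measurable (ξ j)) (hVmeas : ∀ j, Measurable (V j))
    (hindep : iIndepFun (noiseB ξ V) P)
    (hξdist : ∀ j i, Measure.map (fun ω => ξ j ω i) P = xiLaw)
    (hVdist : ∀ j (u : Upper m),
      Measure.map (fun ω => V j ω u.1.1 u.1.2) P = coinLaw)
    (hVanti : ∀ j ω i l, i < l → V j ω l i = -V j ω i l)
    (hVdiag : ∀ j ω i, V j ω i i = -1)
    (Φ : (Fin d → ℝ) → (Fin m → ℝ) → (Fin m → Fin m → ℝ) → Fin d → ℝ)
    (hΦ : Measurable fun p : (Fin d → ℝ) × (Fin m → ℝ) × (Fin m → Fin m → ℝ) =>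
      Φ p.1 p.2.1 p.2.2)
    (f : (Fin d → ℝ) → ℝ) (hf : Measurable f) :
    (∀ᵐ ω ∂P, f (XB Φ x0 ξ V J ω)
        = (∫ ω', f (XB Φ x0 ξ V J ω') ∂P)
          + ∑ j ∈ Finset.Icc 1 J, ∑ U1 : Finset (Fin m),
              ∑ U2 ∈ (Finset.univ : Finset (Finset (Upper m))).filter
                  (fun U2 => U1.Nonempty ∨ U2.Nonempty),
                ∑ K2 ∈ U1.powerset,
                  aB Φ f (J - j) U1 K2 U2 (XB Φ x0 ξ V (j - 1) ω)
                    * (∏ r ∈ U1 \ K2, ξ j ω r) * (∏ r ∈ K2, H2 (ξ j ω r))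
                    * ∏ p ∈ U2, V j ω p.1.1 p.1.2)
      ∧ (∫ ω', f (XB Φ x0 ξ V J ω') ∂P) = qB Φ f J x0 := by
  classical
  have hSxi : MeasurableSet ({-Real.sqrt 3, 0, Real.sqrt 3} : Set ℝ) :=
    (((Set.finite_singleton _).insert _).insert _).measurableSet
  have hSco : MeasurableSet ({-1, 1} : Set ℝ) :=
    ((Set.finite_singleton _).insert _).measurableSet
  have hξi : ∀ j i, Measurable fun ω => ξ j ω i :=
    fun j i => (measurable_pi_apply i).comp (hξmeas j)
  have hVu : ∀ j (p : Upper m), Measurable fun ω => V j ω p.1.1 p.1.2 := fun j p =>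
    (measurable_pi_apply p.1.2).comp ((measurable_pi_apply p.1.1).comp (hVmeas j))
  -- a.s. the noises take their nominal values
  have hae1 : ∀ᵐ ω ∂P, ∀ (j : ℕ) (i : Fin m), val3 (cl (ξ j ω i)) = ξ j ω i := by
    rw [ae_all_iff]; intro j; rw [ae_all_iff]; intro i
    have h0 : P ((fun ω => ξ j ω i) ⁻¹' ({-Real.sqrt 3, 0, Real.sqrt 3}ᶜ : Set ℝ)) = 0 := by
      rw [← Measure.map_apply (hξi j i) hSxi.compl, hξdist j i]
      exact xiLaw_compl
    have hmem : ∀ᵐ ω ∂P, ξ j ω i ∈ ({-Real.sqrt 3, 0, Real.sqrt 3} : Set ℝ) := by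
      rw [ae_iff]; exact h0
    filter_upwards [hmem] with ω hω using val3_cl_mem hω
  have hae2 : ∀ᵐ ω ∂P, ∀ (j : ℕ) (p : Upper m),
      pm (cb (V j ω p.1.1 p.1.2)) = V j ω p.1.1 p.1.2 := by
    rw [ae_all_iff]; intro j; rw [ae_all_iff]; intro p
    have h0 : P ((fun ω => V j ω p.1.1 p.1.2) ⁻¹' ({-1, 1}ᶜ : Set ℝ)) = 0 := by
      rw [← Measure.map_apply (hVu j p) hSco.compl, hVdist j p]
      exact coinLaw_compl
    have hmem : ∀ᵐ ω ∂P, V j ω p.1.1 p.1.2 ∈ ({-1, 1} : Set ℝ) := by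
      rw [ae_iff]; exact h0
    filter_upwards [hmem] with ω hω using pm_cb_mem hω
  -- discrete coding of the noise
  set W : Ω → (Fin J → (Fin m → Fin 3) × (Upper m → Bool)) := fun ω j =>
    ((fun i => cl (ξ ((j : ℕ) + 1) ω i)),
      fun p => cb (V ((j : ℕ) + 1) ω p.1.1 p.1.2)) with hWdef
  have hWmeas : Measurable W :=
    measurable_pi_lambda _ fun j =>
      Measurable.prod
        (measurable_pi_lambda _ fun i => measurable_cl.comp (hξi _ i))
        (measurable_pi_lambda _ fun p => measurable_cb.comp (hVu _ p))
  -- law of the coded noise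
  have hWt : ∀ t : Fin J → (Fin m → Fin 3) × (Upper m → Bool),
      P (W ⁻¹' {t})
        = ∏ j : Fin J, ((∏ i, xiLaw (cl ⁻¹' {(t j).1 i}))
            * ∏ p : Upper m, coinLaw (cb ⁻¹' {(t j).2 p})) := by
    intro t
    set tt : ℕ → (Fin m → Fin 3) × (Upper m → Bool) := fun n =>
      if h : n - 1 < J then t ⟨n - 1, h⟩ else (fun _ => 0, fun _ => false) with htt
    set sets : (ℕ × (Fin m ⊕ Upper m)) → Set ℝ := fun q =>
      Sum.elim (fun i => cl ⁻¹' {(tt q.1).1 i}) (fun p => cb ⁻¹' {(tt q.1).2 p}) q.2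
      with hsets
    have hmeas_sets : ∀ q, MeasurableSet (sets q) := by
      rintro ⟨n, u⟩
      cases u with
      | inl i => exact measurable_cl (measurableSet_singleton _)
      | inr p => exact measurable_cb (measurableSet_singleton _)
    have hset_eq : W ⁻¹' {t}
        = ⋂ q ∈ (Finset.Icc 1 J ×ˢ (Finset.univ : Finset (Fin m ⊕ Upper m))),
            noiseB ξ V q ⁻¹' sets q := by
      ext ω
      simp only [Set.mem_preimage, Set.mem_singleton_iff, Set.mem_iInter,
        Finset.mem_product, Finset.mem_Icc, Finset.mem_univ, and_true]
      constructor
      · intro h q hq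
        obtain ⟨n, u⟩ := q
        obtain ⟨hn1, hnJ⟩ := hq
        have hlt : n - 1 < J := by omega
        have hn : n - 1 + 1 = n := by omega
        have ht' : W ω ⟨n - 1, hlt⟩ = t ⟨n - 1, hlt⟩ := by rw [h]
        have httn : tt n = t ⟨n - 1, hlt⟩ := by rw [htt]; simp only [dif_pos hlt]
        cases u with
        | inl i =>
            show cl (ξ n ω i) = (tt n).1 i
            rw [httn, ← ht']
            show cl (ξ n ω i) = cl (ξ (n - 1 + 1) ω i)
            rw [hn]
        | inr p =>
            show cb (V n ω p.1.1 p.1.2) = (tt n).2 p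
            rw [httn, ← ht']
            show cb (V n ω p.1.1 p.1.2) = cb (V (n - 1 + 1) ω p.1.1 p.1.2)
            rw [hn]
      · intro h
        funext j
        have hj1 : 1 ≤ (j : ℕ) + 1 := by omega
        have hjJ : (j : ℕ) + 1 ≤ J := by omega
        have htj : tt ((j : ℕ) + 1) = t j := by
          rw [htt]
          have : (j : ℕ) + 1 - 1 = (j : ℕ) := by omega
          simp only [this, dif_pos j.isLt, Fin.eta]
        refine Prod.ext ?_ ?_
        · funext i
          have h2 : cl (ξ ((j : ℕ) + 1) ω i) = (tt ((j : ℕ) + 1)).1 i :=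
            h ((j : ℕ) + 1, Sum.inl i) ⟨hj1, hjJ⟩
          rw [htj] at h2
          exact h2
        · funext p
          have h2 : cb (V ((j : ℕ) + 1) ω p.1.1 p.1.2) = (tt ((j : ℕ) + 1)).2 p :=
            h ((j : ℕ) + 1, Sum.inr p) ⟨hj1, hjJ⟩
          rw [htj] at h2
          exact h2
    rw [hset_eq,
      hindep.measure_inter_preimage_eq_mul
        (Finset.Icc 1 J ×ˢ (Finset.univ : Finset (Fin m ⊕ Upper m)))
        (fun q _ => hmeas_sets q),
      Finset.prod_product]
    have hre : ∀ n, 1 ≤ n → n ≤ J →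
        (∏ u : Fin m ⊕ Upper m, P (noiseB ξ V (n, u) ⁻¹' sets (n, u)))
        = (∏ i, xiLaw (cl ⁻¹' {(tt n).1 i})) * ∏ p : Upper m, coinLaw (cb ⁻¹' {(tt n).2 p}) := by
      intro n hn1 hnJ
      rw [Fintype.prod_sum_type]
      congr 1
      · refine Finset.prod_congr rfl fun i _ => ?_
        have e1 : noiseB ξ V (n, Sum.inl i) = fun ω => ξ n ω i := rfl
        have e2 : sets (n, Sum.inl i) = cl ⁻¹' {(tt n).1 i} := rfl
        rw [e1, e2, ← Measure.map_apply (hξi n i)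
          (measurable_cl (measurableSet_singleton _)), hξdist n i]
      · refine Finset.prod_congr rfl fun p _ => ?_
        have e1 : noiseB ξ V (n, Sum.inr p) = fun ω => V n ω p.1.1 p.1.2 := rfl
        have e2 : sets (n, Sum.inr p) = cb ⁻¹' {(tt n).2 p} := rfl
        rw [e1, e2, ← Measure.map_apply (hVu n p)
          (measurable_cb (measurableSet_singleton _)), hVdist n p]
    set F : ℕ → ENNReal := fun n =>
      ∏ u : Fin m ⊕ Upper m, P (noiseB ξ V (n, u) ⁻¹' sets (n, u)) with hFdef
    calc ∏ n ∈ Finset.Icc 1 J, F n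
        = ∏ k ∈ Finset.range J, F (1 + k) := by
          rw [← Finset.Ico_add_one_right_eq_Icc, Finset.prod_Ico_eq_prod_range,
            show J + 1 - 1 = J from rfl]
      _ = ∏ j : Fin J, F (1 + (j : ℕ)) :=
          (Fin.prod_univ_eq_prod_range (fun k => F (1 + k)) J).symm
      _ = ∏ j : Fin J, ((∏ i, xiLaw (cl ⁻¹' {(t j).1 i}))
            * ∏ p : Upper m, coinLaw (cb ⁻¹' {(t j).2 p})) := by
          refine Finset.prod_congr rfl fun j _ => ?_
          simp only [hFdef]
          have hjJ : 1 + (j : ℕ) ≤ J := by have := j.isLt; omega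
          rw [hre (1 + (j : ℕ)) (by omega) hjJ]
          have hidx : 1 + (j : ℕ) - 1 = (j : ℕ) := by omega
          have httn : tt (1 + (j : ℕ)) = t j := by
            rw [htt]
            simp only [hidx, dif_pos j.isLt, Fin.eta]
          rw [httn]
  -- identification of the scheme with the coded evolution
  have hgood : ∀ᵐ ω ∂P, f (XB Φ x0 ξ V J ω) = f (GG Φ J x0 (W ω)) := by
    filter_upwards [hae1, hae2] with ω h1 h2
    rw [XB_eq_GG Φ x0 ξ V ω h1 h2 (fun j i l h => hVanti j ω i l h)
      (fun j i => hVdiag j ω i) J]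
  -- the expectation identity
  have hEq : (∫ ω', f (XB Φ x0 ξ V J ω') ∂P) = qB Φ f J x0 := by
    rw [integral_congr_ae hgood]
    have hfm : Measurable fun t : Fin J → (Fin m → Fin 3) × (Upper m → Bool) =>
        f (GG Φ J x0 t) := measurable_of_countable _
    rw [← integral_map hWmeas.aemeasurable hfm.aestronglyMeasurable]
    have : IsProbabilityMeasure (P.map W) := Measure.isProbabilityMeasure_map hWmeas.aemeasurable
    rw [integral_fintype (Integrable.of_finite)]
    rw [qB_eq_sum]
    refine Finset.sum_congr rfl fun t _ => ?_
    rw [measureReal_def, Measure.map_apply hWmeas (measurableSet_singleton t), hWt t, smul_eq_mul]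
    congr 1
    rw [ENNReal.toReal_prod]
    refine Finset.prod_congr rfl fun j _ => ?_
    rw [ENNReal.toReal_mul, ENNReal.toReal_prod, ENNReal.toReal_prod]
    simp only [xiLaw_cl, coinLaw_cb, w3e_toReal, WW]
    congr 1
    refine Finset.prod_congr rfl fun p _ => ?_
    norm_num [ENNReal.toReal_div]
  refine ⟨?_, hEq⟩
  filter_upwards [hae1, hae2] with ω h1 h2
  rw [hEq]
  exact partA Φ f x0 J ξ V ω h1 h2 (fun j i l h => hVanti j ω i l h)
    (fun j i => hVdiag j ω i)

end
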